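/- Let n ≥ 1, τ ∈ ℕ, and M ≥ 1 be real. Set q = 6(τ+1)eM/√n (e is Euler's number), ρ = (1+q)², and θ = ∑_{t=1}^{τ} ρ^{t/2}. If q(τ+1) ≤ 1, then ρ^{−1} ≤ 1 − (4 + 4M + 4Mθ)/√n. -/

import Mathlib

/-- Let `q = 6(τ+1)eM/√n`, `ρ = (1+q)²` and `θ = ∑_{t=1}^{τ} ρ^{t/2} = ∑_{t=1}^{τ} (1+q)^t`
with `M ≥ 1`. If `q(τ+1) ≤ 1`, then `ρ⁻¹ ≤ 1 − (4 + 4M + 4Mθ)/√n`. -/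
theorem rho_inv_bound
    (n : ℕ) (hn : 1 ≤ n) (τ : ℕ) (M : ℝ) (hM : 1 ≤ M)
    (q ρ θ : ℝ)
    (hq : q = 6 * (τ + 1) * Real.exp 1 * M / Real.sqrt n)
    (hρ : ρ = (1 + q) ^ 2)
    (hθ : θ = ∑ t ∈ Finset.Icc 1 τ, (1 + q) ^ t)
    (hcond : q * (τ + 1) ≤ 1) :
    ρ⁻¹ ≤ 1 - (4 + 4 * M + 4 * M * θ) / Real.sqrt n := by
  set s := Real.sqrt n with hs
  have hspos : 0 < s := Real.sqrt_pos.mpr (by exact_mod_cast Nat.pos_of_ne_zero (by omega))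
  have he : (2:ℝ) ≤ Real.exp 1 := by
    have := Real.add_one_le_exp (1:ℝ); linarith
  have hτ1 : (1:ℝ) ≤ (τ:ℝ) + 1 := by have := Nat.cast_nonneg (α := ℝ) τ; linarith
  have hq0 : 0 < q := by rw [hq]; positivity
  have hq1 : q ≤ 1 := by nlinarith
  have hqs : q * s = 6 * (τ + 1) * Real.exp 1 * M := by
    rw [hq]; field_simp
  have hθle : θ ≤ (τ:ℝ) * Real.exp 1 := by
    rw [hθ]
    calc ∑ t ∈ Finset.Icc 1 τ, (1+q)^t ≤ ∑ t ∈ Finset.Icc 1 τ, Real.exp 1 := by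
          apply Finset.sum_le_sum
          intro t ht
          have ht' : (t:ℝ) ≤ τ := by exact_mod_cast (Finset.mem_Icc.mp ht).2
          have h1 : (1+q)^t ≤ (Real.exp q)^t := by
            apply pow_le_pow_left₀ (by linarith)
            have := Real.add_one_le_exp q; linarith
          have h2 : (Real.exp q)^t = Real.exp ((t:ℝ) * q) := by
            rw [← Real.exp_nat_mul]
          have h3 : Real.exp ((t:ℝ) * q) ≤ Real.exp 1 := by
            apply Real.exp_le_exp.mpr
            nlinarith
          calc (1+q)^t ≤ (Real.exp q)^t := h1
            _ = Real.exp ((t:ℝ) * q) := h2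
            _ ≤ Real.exp 1 := h3
      _ = (τ:ℝ) * Real.exp 1 := by
          rw [Finset.sum_const, Nat.card_Icc]
          simp
  have hX : 4 + 4 * M + 4 * M * θ ≤ 4 * ((τ:ℝ)+1) * Real.exp 1 * M := by
    have hMθ : 4 * M * θ ≤ 4 * M * ((τ:ℝ) * Real.exp 1) :=
      mul_le_mul_of_nonneg_left hθle (by linarith)
    nlinarith
  have hXs : (4 + 4 * M + 4 * M * θ) / s ≤ 2 * q / 3 := by
    rw [div_le_iff₀ hspos]
    have : 2 * q / 3 * s = 2 / 3 * (q * s) := by ring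
    rw [this, hqs]
    linarith
  have hρpos : 0 < ρ := by rw [hρ]; positivity
  have hinv : ρ⁻¹ ≤ 1 - 2 * q / 3 := by
    rw [inv_eq_one_div, div_le_iff₀ hρpos, hρ]
    nlinarith [mul_nonneg hq0.le (show (0:ℝ) ≤ 4 - q - 2*q^2 by nlinarith)]
  linarith
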